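/- Hexagonal embedding independence: fix d = 3, p ∈ (0,1], λ ∈ [0,1] and k ∈ Z, and set V_1 = {(x,y,z) ∈ Z³ : x+y+z = k}, V_2 = {(x,y,z) ∈ Z³ : x+y+z = k+1}. Under ℙ_{p,λ,3}, the open/closed states of the nearest-neighbor edges of Z³ having one endpoint in V_1 and the other in V_2 form a family of independent Bernoulli random variables, each open with probability λ. -/

import Mathlib

open MeasureTheory ENNReal

namespace AlignmentPercolation

/-- Sites of the lattice `ℤ^d`. -/
abbrev Site (d : ℕ) := Fin d → ℤ

/-- A site configuration: `true` means occupied. -/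
abbrev SiteCfg (d : ℕ) := Site d → Bool

/-- Labels (open/closed) attached to (potential) segments, indexed by their ordered
pair of endpoints. -/
abbrev PairLabels (d : ℕ) := Site d × Site d → Bool

/-- A configuration of the independent alignment percolation model: a site
configuration together with independent labels for the segments. -/
abbrev Cfg (d : ℕ) := SiteCfg d × PairLabels d

/-- Nearest-neighbour edges of `ℤ^d`, indexed by their lower endpoint and direction:
`(u, i)` is the edge from `u` to `u + e_i`. -/
abbrev EdgeIdx (d : ℕ) := Site d × Fin d

/-- The point obtained from `u` by replacing its `i`-th coordinate with `a`. -/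
def seg {d : ℕ} (u : Site d) (i : Fin d) (a : ℤ) : Site d := Function.update u i a

/-- The point `u + e_i`. -/
def up {d : ℕ} (u : Site d) (i : Fin d) : Site d := seg u i (u i + 1)

/-- The skewed doubling map underlying the construction of an i.i.d.
Bernoulli(p) sequence from a single uniform random variable on `[0,1)`. -/
noncomputable def bernShift (p : ℝ) (x : ℝ) : ℝ :=
  if x < p then x / p else (x - p) / (1 - p)

open scoped Classical in
noncomputable def bernDigit (p : ℝ) (x : ℝ) : Bool := if x < p then true else false

/-- The sequence of skewed binary digits of `x`; under the uniform distribution on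
`[0,1)` this is an i.i.d. Bernoulli(p) sequence. -/
noncomputable def bernDigits (p : ℝ) (x : ℝ) : ℕ → Bool :=
  fun n => bernDigit p ((bernShift p)^[n] x)

/-- The i.i.d. Bernoulli(p) product probability measure on `ι → Bool`, for a countable
index type `ι`: the law of the family of skewed binary digits (indexed through an
injection `ι ↪ ℕ`) of a uniform random variable on `[0,1)`. Each coordinate is `true`
with probability `p` (with the convention that `p` is clamped to `[0,1]`). -/
noncomputable def iidBool (ι : Type*) [Countable ι] (p : ℝ) : Measure (ι → Bool) :=
  Measure.map (fun f (i : ι) => f ((Countable.exists_injective_nat ι).choose i))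
    (Measure.map (bernDigits p) (volume.restrict (Set.Ico (0 : ℝ) 1)))

/-- The law `ℙ_{p,λ,d}` of the independent alignment percolation model: sites are
occupied independently with probability `p`, and independently every potential
segment carries an independent Bernoulli(λ) label. -/
noncomputable def alignMeasure (d : ℕ) (p lam : ℝ) : Measure (Cfg d) :=
  (iidBool (Site d) p).prod (iidBool (Site d × Site d) lam)

/-- `(v, w)` is a feasible pair of the site configuration `ω` (ordered so that the
coordinate where they differ increases): `v` and `w` differ in exactly one
coordinate, are both occupied, and no site strictly between them is occupied. -/
def FeasiblePair {d : ℕ} (ω : SiteCfg d) (v w : Site d) : Prop :=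
  ∃ i : Fin d, (∀ j, j ≠ i → v j = w j) ∧ v i < w i ∧
    ω v = true ∧ ω w = true ∧ ∀ c : ℤ, v i < c → c < w i → ω (seg v i c) = false

/-- The edge `e` lies on the axis-parallel segment with endpoints `v` and `w`. -/
def EdgeOnSeg {d : ℕ} (e : EdgeIdx d) (v w : Site d) : Prop :=
  ∃ a b : ℤ, a ≤ e.1 e.2 ∧ e.1 e.2 < b ∧ v = seg e.1 e.2 a ∧ w = seg e.1 e.2 b

/-- The edge `e` is open in the configuration `ξ`: it lies on the segment of a
feasible pair whose label is open. -/
def EdgeOpen {d : ℕ} (ξ : Cfg d) (e : EdgeIdx d) : Prop :=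
  ∃ v w : Site d, FeasiblePair ξ.1 v w ∧ EdgeOnSeg e v w ∧ ξ.2 (v, w) = true

/-- The induced edge configuration `σ ∈ {0,1}^{E^d}` (as a `Bool`). -/
noncomputable def edgeState {d : ℕ} (ξ : Cfg d) (e : EdgeIdx d) : Bool :=
  @decide (EdgeOpen ξ e) (Classical.propDecidable _)

/-- The graph on `ℤ^d` whose edges are the open edges of the configuration `ξ`. -/
def openGraph {d : ℕ} (ξ : Cfg d) : SimpleGraph (Site d) where
  Adj u v := ∃ i, (v = up u i ∧ EdgeOpen ξ (u, i)) ∨ (u = up v i ∧ EdgeOpen ξ (v, i))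
  symm := ⟨by rintro u v ⟨i, h | h⟩; exacts [⟨i, Or.inr h⟩, ⟨i, Or.inl h⟩]⟩
  loopless := ⟨by
    rintro u ⟨i, ⟨h, -⟩ | ⟨h, -⟩⟩ <;>
    · have := congrFun h i
      simp [up, seg] at this⟩

/-- The site `v` lies in an infinite connected component of open edges. -/
def PercolatesFrom {d : ℕ} (ξ : Cfg d) (v : Site d) : Prop :=
  {w | (openGraph ξ).Reachable v w}.Infinite

/-- The set `𝒪` of open edges percolates. -/
def Percolates {d : ℕ} (ξ : Cfg d) : Prop := ∃ v, PercolatesFrom ξ v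

/-- `θ(p,λ,d)`: the probability that the origin lies in an infinite open cluster. -/
noncomputable def theta (d : ℕ) (p lam : ℝ) : ℝ≥0∞ :=
  alignMeasure d p lam {ξ | PercolatesFrom ξ 0}

/-- `ℙ_{p,λ,d}(𝒪 percolates)`. -/
noncomputable def percProb (d : ℕ) (p lam : ℝ) : ℝ≥0∞ :=
  alignMeasure d p lam {ξ | Percolates ξ}

/-- The critical segment parameter `λ_c(p,d) = sup {λ ≥ 0 : θ(p,λ,d) = 0}`. -/
noncomputable def lambdaC (d : ℕ) (p : ℝ) : ℝ :=
  sSup {lam : ℝ | 0 ≤ lam ∧ theta d p lam = 0}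

/-- A configuration of Bernoulli bond percolation on `ℤ^d`. -/
abbrev BondCfg (d : ℕ) := EdgeIdx d → Bool

/-- Independent Bernoulli(λ) bond percolation on `ℤ^d`. -/
noncomputable def bondMeasure (d : ℕ) (lam : ℝ) : Measure (BondCfg d) :=
  iidBool (EdgeIdx d) lam

/-- The graph of open bonds of a bond configuration. -/
def bondGraph {d : ℕ} (σ : BondCfg d) : SimpleGraph (Site d) where
  Adj u v := ∃ i, (v = up u i ∧ σ (u, i) = true) ∨ (u = up v i ∧ σ (v, i) = true)
  symm := ⟨by rintro u v ⟨i, h | h⟩; exacts [⟨i, Or.inr h⟩, ⟨i, Or.inl h⟩]⟩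
  loopless := ⟨by
    rintro u ⟨i, ⟨h, -⟩ | ⟨h, -⟩⟩ <;>
    · have := congrFun h i
      simp [up, seg] at this⟩

/-- The percolation function of Bernoulli bond percolation on `ℤ^d`. -/
noncomputable def thetaBond (d : ℕ) (lam : ℝ) : ℝ≥0∞ :=
  bondMeasure d lam {σ | {w | (bondGraph σ).Reachable 0 w}.Infinite}

/-- The critical parameter `p_c^bond(d)` of Bernoulli bond percolation on `ℤ^d`. -/
noncomputable def pcBond (d : ℕ) : ℝ :=
  sSup {lam : ℝ | 0 ≤ lam ∧ thetaBond d lam = 0}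

/-- The (closed) sup-norm box `B(x,L)` in `ℤ^d`. -/
def box (d : ℕ) (x : Site d) (L : ℝ) : Set (Site d) :=
  {z | ∀ i, |((z i - x i : ℤ) : ℝ)| ≤ L}

/-- The sphere `∂B(x,L) = {z : ‖z - x‖_∞ = ⌊L⌋}` in `ℤ^d`. -/
def sphere (d : ℕ) (x : Site d) (L : ℝ) : Set (Site d) :=
  {z | (∀ i, |z i - x i| ≤ ⌊L⌋) ∧ ∃ i, |z i - x i| = ⌊L⌋}

/-- The sup-norm distance `‖x - y‖_∞` on `ℤ^d` (as a natural number). -/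
def supDist {d : ℕ} (x y : Site d) : ℕ :=
  Finset.univ.sup fun i => (x i - y i).natAbs

/-- The sequence of scales: `L 0 = 10^4` and `L (k+1) = (L k)^(3/2)`. -/
noncomputable def Lscale : ℕ → ℝ
  | 0 => 10 ^ 4
  | k + 1 => Lscale k ^ ((3 : ℝ) / 2)

/-- `α(p) = -log (1-p)`. -/
noncomputable def alphaP (p : ℝ) : ℝ := - Real.log (1 - p)

/-- The edge `e` has both endpoints in `B`. -/
def EdgeIn {d : ℕ} (B : Set (Site d)) (e : EdgeIdx d) : Prop :=
  e.1 ∈ B ∧ up e.1 e.2 ∈ B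

/-- The event `A` is supported on the edges of `B`: it is measurable with respect to
the σ-algebra generated by the states of the edges with both endpoints in `B`. -/
def SupportedOnEdges {d : ℕ} (B : Set (Site d)) (A : Set (Cfg d)) : Prop :=
  MeasurableSet[MeasurableSpace.comap
    (fun ξ (e : {e : EdgeIdx d // EdgeIn B e}) => edgeState ξ e.1) inferInstance] A

/-- `S` is a set of points of `T` whose `L`-boxes cover `T`. -/
def IsCover (d : ℕ) (T : Set (Site d)) (L : ℝ) (S : Finset (Site d)) : Prop :=
  ↑S ⊆ T ∧ T ⊆ ⋃ x ∈ S, box d x L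

/-- `S` is a cover of `T` by `L`-boxes centred in `T`, of minimal cardinality. -/
def IsMinCover (d : ℕ) (T : Set (Site d)) (L : ℝ) (S : Finset (Site d)) : Prop :=
  IsCover d T L S ∧ ∀ S' : Finset (Site d), IsCover d T L S' → S.card ≤ S'.card



section Aux
open Set

noncomputable def qB (p : ℝ) (b : Bool) : ℝ≥0∞ :=
  if b then ENNReal.ofReal p else ENNReal.ofReal (1 - p)

lemma measurable_bernShift (p : ℝ) : Measurable (bernShift p) := by
  unfold bernShift
  exact Measurable.ite (measurableSet_lt measurable_id measurable_const)
    (measurable_id.div_const p) ((measurable_id.sub_const p).div_const (1 - p))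

lemma measurable_bernDigit (p : ℝ) : Measurable (bernDigit p) := by
  unfold bernDigit
  exact Measurable.ite (measurableSet_lt measurable_id measurable_const)
    measurable_const measurable_const

lemma measurable_bernDigits (p : ℝ) : Measurable (bernDigits p) := by
  apply measurable_pi_lambda
  intro n
  exact (measurable_bernDigit p).comp ((measurable_bernShift p).iterate n)

lemma branch_true (p : ℝ) (hp1 : p ≤ 1) (S : Set ℝ) :
    volume {x : ℝ | x ∈ Ico (0:ℝ) 1 ∧ x < p ∧ bernShift p x ∈ S}
      = ENNReal.ofReal p * volume (S ∩ Ico 0 1) := by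
  rcases le_or_gt p 0 with h | h
  · have he : {x : ℝ | x ∈ Ico (0:ℝ) 1 ∧ x < p ∧ bernShift p x ∈ S} = ∅ := by
      ext x; simp only [mem_setOf_eq, mem_Ico, mem_empty_iff_false, iff_false, not_and]
      rintro ⟨h0, _⟩ hlt; linarith
    rw [he]; simp [ENNReal.ofReal_eq_zero.2 h]
  · have hset : {x : ℝ | x ∈ Ico (0:ℝ) 1 ∧ x < p ∧ bernShift p x ∈ S}
        = (p⁻¹ * ·) ⁻¹' (S ∩ Ico 0 1) := by
      ext x
      simp only [mem_setOf_eq, mem_preimage, mem_inter_iff, mem_Ico]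
      rw [show p⁻¹ * x = x / p from (div_eq_inv_mul x p).symm]
      constructor
      · rintro ⟨⟨h0, _⟩, hlt, hs⟩
        have hb : bernShift p x = x / p := by rw [bernShift, if_pos hlt]
        rw [hb] at hs
        exact ⟨hs, by positivity, (div_lt_one h).2 hlt⟩
      · rintro ⟨hs, h0, h1'⟩
        have hxp : x < p := (div_lt_one h).1 h1'
        have hx0 : 0 ≤ x := by
          rcases div_nonneg_iff.1 h0 with ⟨hx, _⟩ | ⟨_, hp'⟩
          · exact hx
          · linarith
        have hb : bernShift p x = x / p := by rw [bernShift, if_pos hxp]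
        exact ⟨⟨hx0, by linarith⟩, hxp, hb ▸ hs⟩
    rw [hset, Real.volume_preimage_mul_left (inv_ne_zero h.ne') _, inv_inv,
      abs_of_pos h]

lemma branch_false (p : ℝ) (hp0 : 0 ≤ p) (S : Set ℝ) :
    volume {x : ℝ | x ∈ Ico (0:ℝ) 1 ∧ ¬ x < p ∧ bernShift p x ∈ S}
      = ENNReal.ofReal (1 - p) * volume (S ∩ Ico 0 1) := by
  rcases le_or_gt 1 p with h | h
  · have he : {x : ℝ | x ∈ Ico (0:ℝ) 1 ∧ ¬ x < p ∧ bernShift p x ∈ S} = ∅ := by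
      ext x; simp only [mem_setOf_eq, mem_Ico, mem_empty_iff_false, iff_false, not_and]
      rintro ⟨_, h1⟩ hge; exact absurd (lt_of_lt_of_le h1 h) hge
    rw [he]; simp [ENNReal.ofReal_eq_zero.2 (by linarith : 1 - p ≤ 0)]
  · have h1p : (0:ℝ) < 1 - p := by linarith
    have hset : {x : ℝ | x ∈ Ico (0:ℝ) 1 ∧ ¬ x < p ∧ bernShift p x ∈ S}
        = (· + (-p)) ⁻¹' (((1 - p)⁻¹ * ·) ⁻¹' (S ∩ Ico 0 1)) := by
      ext x
      simp only [mem_setOf_eq, mem_preimage, mem_inter_iff, mem_Ico]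
      rw [show (1 - p)⁻¹ * (x + -p) = (x - p) / (1 - p) by ring]
      constructor
      · rintro ⟨⟨h0, h1'⟩, hge, hs⟩
        have hb : bernShift p x = (x - p) / (1 - p) := by rw [bernShift, if_neg hge]
        rw [hb] at hs
        push_neg at hge
        exact ⟨hs, div_nonneg (by linarith) (by linarith), (div_lt_one h1p).2 (by linarith)⟩
      · rintro ⟨hs, h0, h1'⟩
        have hge : p ≤ x := by
          rcases div_nonneg_iff.1 h0 with ⟨hx, _⟩ | ⟨_, hp'⟩
          · linarith
          · linarith
        have hx1 : x < 1 := by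
          have := (div_lt_one h1p).1 h1'
          linarith
        have hb : bernShift p x = (x - p) / (1 - p) := by
          rw [bernShift, if_neg (not_lt.2 hge)]
        exact ⟨⟨by linarith, hx1⟩, not_lt.2 hge, hb ▸ hs⟩
    rw [hset, measure_preimage_add_right, Real.volume_preimage_mul_left
      (inv_ne_zero h1p.ne') _, inv_inv, abs_of_pos h1p]

lemma measurableSet_digitsEvent (p : ℝ) (F : Finset ℕ) (χ : ℕ → Bool) (N : ℕ)
    (A : Set ℝ) (hA : MeasurableSet A) :
    MeasurableSet {y : ℝ | (∀ n ∈ F, bernDigits p y n = χ n) ∧ (bernShift p)^[N] y ∈ A} := by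
  have h1 : MeasurableSet (⋂ n ∈ F, (fun y : ℝ => bernDigits p y n) ⁻¹' {χ n}) :=
    MeasurableSet.biInter F.countable_toSet fun n _ =>
      (((measurable_bernDigit p).comp ((measurable_bernShift p).iterate n))
        (measurableSet_singleton (χ n)) : MeasurableSet _)
  have h2 : MeasurableSet ((bernShift p)^[N] ⁻¹' A) := ((measurable_bernShift p).iterate N) hA
  have he : {y : ℝ | (∀ n ∈ F, bernDigits p y n = χ n) ∧ (bernShift p)^[N] y ∈ A}
      = (⋂ n ∈ F, (fun y : ℝ => bernDigits p y n) ⁻¹' {χ n}) ∩ ((bernShift p)^[N] ⁻¹' A) := by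
    ext y; simp [bernDigits]
  rw [he]; exact h1.inter h2

lemma key_induction (p : ℝ) (hp0 : 0 ≤ p) (hp1 : p ≤ 1) :
    ∀ (N : ℕ) (F : Finset ℕ), (∀ n ∈ F, n < N) → ∀ (χ : ℕ → Bool) (A : Set ℝ),
    MeasurableSet A →
    volume {x : ℝ | x ∈ Ico (0:ℝ) 1 ∧ (∀ n ∈ F, bernDigits p x n = χ n)
        ∧ (bernShift p)^[N] x ∈ A}
      = (∏ n ∈ F, qB p (χ n)) * volume (A ∩ Ico 0 1) := by
  intro N
  induction N with
  | zero =>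
    intro F hF χ A hA
    have hFe : F = ∅ := Finset.eq_empty_of_forall_notMem fun n hn =>
      Nat.not_lt_zero n (hF n hn)
    subst hFe
    have : {x : ℝ | x ∈ Ico (0:ℝ) 1 ∧ (∀ n ∈ (∅ : Finset ℕ), bernDigits p x n = χ n)
        ∧ (bernShift p)^[0] x ∈ A} = A ∩ Ico 0 1 := by
      ext x
      simp only [mem_setOf_eq, mem_inter_iff, mem_Ico, Finset.notMem_empty, false_implies,
        implies_true, true_and, Function.iterate_zero_apply]
      tauto
    rw [this]; simp
  | succ N ih =>
    intro F hF χ A hA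
    classical
    set T := bernShift p with hT
    set F' : Finset ℕ := (F.erase 0).image Nat.pred with hF'def
    have hmemF' : ∀ m, m ∈ F' ↔ m + 1 ∈ F := by
      intro m
      simp only [hF'def, Finset.mem_image, Finset.mem_erase]
      constructor
      · rintro ⟨n, ⟨hn0, hnF⟩, rfl⟩
        have hn1 : n.pred + 1 = n := Nat.succ_pred_eq_of_pos (Nat.pos_of_ne_zero hn0)
        rwa [hn1]
      · intro h
        exact ⟨m + 1, ⟨Nat.succ_ne_zero m, h⟩, rfl⟩
    have hF'lt : ∀ m ∈ F', m < N := fun m hm =>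
      Nat.lt_of_succ_lt_succ (hF (m + 1) ((hmemF' m).1 hm))
    set χ' : ℕ → Bool := fun m => χ (m + 1) with hχ'def
    set S : Set ℝ := {y : ℝ | (∀ m ∈ F', bernDigits p y m = χ' m) ∧ T^[N] y ∈ A}
      with hSdef
    have hSmeas : MeasurableSet S := measurableSet_digitsEvent p F' χ' N A hA
    have hIH : volume (S ∩ Ico 0 1) = (∏ m ∈ F', qB p (χ' m)) * volume (A ∩ Ico 0 1) := by
      have := ih F' hF'lt χ' A hA
      rw [← this]; congr 1
      ext x
      simp only [hSdef, mem_inter_iff, mem_setOf_eq]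
      tauto
    have hprodshift : ∏ n ∈ F.erase 0, qB p (χ n) = ∏ m ∈ F', qB p (χ' m) := by
      rw [hF'def, Finset.prod_image]
      · refine Finset.prod_congr rfl fun n hn => ?_
        have hn0 : n ≠ 0 := Finset.ne_of_mem_erase hn
        simp only [hχ'def]
        have hn1 : n.pred + 1 = n := Nat.succ_pred_eq_of_pos (Nat.pos_of_ne_zero hn0)
        rw [hn1]
      · intro a ha b hb hab
        have ha0 := Finset.ne_of_mem_erase ha
        have hb0 := Finset.ne_of_mem_erase hb
        simp only [Nat.pred_eq_sub_one] at hab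
        omega
    -- pointwise description
    have hpoint : ∀ x : ℝ,
        ((∀ n ∈ F, bernDigits p x n = χ n) ∧ T^[N + 1] x ∈ A)
          ↔ ((0 ∈ F → bernDigit p x = χ 0) ∧ T x ∈ S) := by
      intro x
      have hit : ∀ n : ℕ, bernDigits p x (n + 1) = bernDigits p (T x) n := by
        intro n
        simp only [bernDigits, hT, Function.iterate_succ_apply]
      have hit0 : bernDigits p x 0 = bernDigit p x := by
        simp [bernDigits]
      constructor
      · rintro ⟨h1, h2⟩
        refine ⟨fun h0 => by rw [← hit0]; exact h1 0 h0, ?_, ?_⟩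
        · intro m hm
          rw [← hit]
          exact h1 (m + 1) ((hmemF' m).1 hm)
        · rwa [← Function.iterate_succ_apply]
      · rintro ⟨h0, hS1, hS2⟩
        refine ⟨fun n hn => ?_, by rwa [Function.iterate_succ_apply]⟩
        rcases Nat.eq_zero_or_pos n with rfl | hpos
        · rw [hit0]; exact h0 hn
        · obtain ⟨m, rfl⟩ := Nat.exists_eq_add_of_lt hpos
          rw [zero_add] at *
          rw [hit]
          exact hS1 m ((hmemF' m).2 hn)
    set E : Set ℝ := {x : ℝ | x ∈ Ico (0:ℝ) 1 ∧ (∀ n ∈ F, bernDigits p x n = χ n)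
        ∧ T^[N + 1] x ∈ A} with hEdef
    have hE : E = {x : ℝ | x ∈ Ico (0:ℝ) 1 ∧ (0 ∈ F → bernDigit p x = χ 0) ∧ T x ∈ S} := by
      ext x
      simp only [hEdef, mem_setOf_eq]
      constructor
      · rintro ⟨hx, h⟩; exact ⟨hx, (hpoint x).1 h⟩
      · rintro ⟨hx, h⟩; exact ⟨hx, (hpoint x).2 h⟩
    have hdig_true : ∀ x : ℝ, x < p → bernDigit p x = true := fun x hx => by
      simp [bernDigit, hx]
    have hdig_false : ∀ x : ℝ, ¬ x < p → bernDigit p x = false := fun x hx => by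
      simp [bernDigit, hx]
    have hsplit : volume E = volume (E ∩ {x : ℝ | x < p}) + volume (E \ {x : ℝ | x < p}) :=
      (measure_inter_add_diff E (measurableSet_lt measurable_id measurable_const)).symm
    by_cases h0F : 0 ∈ F
    · cases hχ0 : χ 0 with
      | true =>
        have hEtrue : E ∩ {x : ℝ | x < p}
            = {x : ℝ | x ∈ Ico (0:ℝ) 1 ∧ x < p ∧ T x ∈ S} := by
          rw [hE]; ext x
          simp only [mem_inter_iff, mem_setOf_eq]
          constructor
          · rintro ⟨⟨hx, _, hTS⟩, hlt⟩; exact ⟨hx, hlt, hTS⟩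
          · rintro ⟨hx, hlt, hTS⟩
            exact ⟨⟨hx, fun _ => by rw [hdig_true x hlt, hχ0], hTS⟩, hlt⟩
        have hEfalse : E \ {x : ℝ | x < p} = ∅ := by
          rw [hE]; ext x
          simp only [mem_diff, mem_setOf_eq, mem_empty_iff_false, iff_false, not_and]
          rintro ⟨hx, hd, hTS⟩ hge
          rw [hdig_false x hge, hχ0] at hd
          exact absurd (hd h0F) (by decide)
        rw [hsplit, hEtrue, hEfalse, measure_empty, add_zero, branch_true p hp1 S, hIH,
          ← Finset.mul_prod_erase F _ h0F, hχ0, hprodshift]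
        simp only [qB, if_pos]
        ring
      | false =>
        have hEtrue : E ∩ {x : ℝ | x < p} = ∅ := by
          rw [hE]; ext x
          simp only [mem_inter_iff, mem_setOf_eq, mem_empty_iff_false, iff_false, not_and]
          rintro ⟨hx, hd, hTS⟩ hlt
          rw [hdig_true x hlt, hχ0] at hd
          exact absurd (hd h0F) (by decide)
        have hEfalse : E \ {x : ℝ | x < p}
            = {x : ℝ | x ∈ Ico (0:ℝ) 1 ∧ ¬ x < p ∧ T x ∈ S} := by
          rw [hE]; ext x
          simp only [mem_diff, mem_setOf_eq]
          constructor
          · rintro ⟨⟨hx, _, hTS⟩, hge⟩; exact ⟨hx, hge, hTS⟩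
          · rintro ⟨hx, hge, hTS⟩
            exact ⟨⟨hx, fun _ => by rw [hdig_false x hge, hχ0], hTS⟩, hge⟩
        rw [hsplit, hEtrue, hEfalse, measure_empty, zero_add, branch_false p hp0 S, hIH,
          ← Finset.mul_prod_erase F _ h0F, hχ0, hprodshift]
        simp only [qB, Bool.false_eq_true, if_neg, if_false]
        ring
    · have hF'alt : F.erase 0 = F := Finset.erase_eq_of_notMem h0F
      have hEtrue : E ∩ {x : ℝ | x < p}
          = {x : ℝ | x ∈ Ico (0:ℝ) 1 ∧ x < p ∧ T x ∈ S} := by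
        rw [hE]; ext x
        simp only [mem_inter_iff, mem_setOf_eq]
        constructor
        · rintro ⟨⟨hx, _, hTS⟩, hlt⟩; exact ⟨hx, hlt, hTS⟩
        · rintro ⟨hx, hlt, hTS⟩
          exact ⟨⟨hx, fun h => absurd h h0F, hTS⟩, hlt⟩
      have hEfalse : E \ {x : ℝ | x < p}
          = {x : ℝ | x ∈ Ico (0:ℝ) 1 ∧ ¬ x < p ∧ T x ∈ S} := by
        rw [hE]; ext x
        simp only [mem_diff, mem_setOf_eq]
        constructor
        · rintro ⟨⟨hx, _, hTS⟩, hge⟩; exact ⟨hx, hge, hTS⟩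
        · rintro ⟨hx, hge, hTS⟩
          exact ⟨⟨hx, fun h => absurd h h0F, hTS⟩, hge⟩
      rw [hsplit, hEtrue, hEfalse, branch_true p hp1 S, branch_false p hp0 S, hIH,
        ← hprodshift, hF'alt]
      have hone : ENNReal.ofReal p + ENNReal.ofReal (1 - p) = 1 := by
        rw [← ENNReal.ofReal_add hp0 (by linarith)]; norm_num
      rw [← add_mul, hone, one_mul]

lemma digits_cyl (p : ℝ) (hp0 : 0 ≤ p) (hp1 : p ≤ 1) (F : Finset ℕ) (χ : ℕ → Bool) :
    volume {x : ℝ | x ∈ Ico (0:ℝ) 1 ∧ ∀ n ∈ F, bernDigits p x n = χ n}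
      = ∏ n ∈ F, qB p (χ n) := by
  have hk := key_induction p hp0 hp1 (F.sup id + 1) F
    (fun n hn => Nat.lt_succ_of_le (Finset.le_sup (f := id) hn)) χ univ MeasurableSet.univ
  have hset : {x : ℝ | x ∈ Ico (0:ℝ) 1 ∧ (∀ n ∈ F, bernDigits p x n = χ n)
      ∧ (bernShift p)^[F.sup id + 1] x ∈ univ}
      = {x : ℝ | x ∈ Ico (0:ℝ) 1 ∧ ∀ n ∈ F, bernDigits p x n = χ n} := by
    ext x; simp
  rw [hset] at hk
  rw [hk, univ_inter, Real.volume_Ico]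
  simp

lemma measurableSet_boolCyl {ι : Type*} (F : Finset ι) (χ : ι → Bool) :
    MeasurableSet {f : ι → Bool | ∀ i ∈ F, f i = χ i} := by
  have he : {f : ι → Bool | ∀ i ∈ F, f i = χ i}
      = ⋂ i ∈ F, (fun f : ι → Bool => f i) ⁻¹' {χ i} := by
    ext f; simp
  rw [he]
  exact MeasurableSet.biInter F.countable_toSet fun i _ =>
    (measurable_pi_apply i) (measurableSet_singleton (χ i))

lemma measurable_reindex {ι : Type*} [Countable ι] :
    Measurable (fun (f : ℕ → Bool) (i : ι) => f ((Countable.exists_injective_nat ι).choose i)) :=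
  measurable_pi_lambda _ fun i => measurable_pi_apply _

lemma iidBool_cyl {ι : Type*} [Countable ι] (p : ℝ) (hp0 : 0 ≤ p) (hp1 : p ≤ 1)
    (F : Finset ι) (χ : ι → Bool) :
    iidBool ι p {f : ι → Bool | ∀ i ∈ F, f i = χ i} = ∏ i ∈ F, qB p (χ i) := by
  classical
  set ε := (Countable.exists_injective_nat ι).choose with hεdef
  have hε : Function.Injective ε := (Countable.exists_injective_nat ι).choose_spec
  set χ'' : ℕ → Bool := fun n => if h : ∃ i ∈ F, ε i = n then χ h.choose else true with hχ''
  have hχ''e : ∀ i ∈ F, χ'' (ε i) = χ i := by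
    intro i hi
    have hex : ∃ j ∈ F, ε j = ε i := ⟨i, hi, rfl⟩
    have : χ'' (ε i) = χ hex.choose := by
      simp only [hχ'']
      rw [dif_pos hex]
    rw [this]
    obtain ⟨-, hji⟩ := hex.choose_spec
    rw [hε hji]
  rw [iidBool, ← hεdef,
    Measure.map_apply measurable_reindex (measurableSet_boolCyl F χ),
    Measure.map_apply (measurable_bernDigits p)
      (measurable_reindex (measurableSet_boolCyl F χ)),
    Measure.restrict_apply ((measurable_bernDigits p)
      (measurable_reindex (measurableSet_boolCyl F χ)))]
  have hset : bernDigits p ⁻¹'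
        ((fun (f : ℕ → Bool) (i : ι) => f (ε i)) ⁻¹' {f : ι → Bool | ∀ i ∈ F, f i = χ i})
        ∩ Ico (0:ℝ) 1
      = {x : ℝ | x ∈ Ico (0:ℝ) 1 ∧ ∀ n ∈ F.image ε, bernDigits p x n = χ'' n} := by
    ext x
    simp only [mem_inter_iff, mem_preimage, mem_setOf_eq, Finset.mem_image]
    constructor
    · rintro ⟨h1, h2⟩
      refine ⟨h2, ?_⟩
      rintro n ⟨i, hi, rfl⟩
      rw [hχ''e i hi]
      exact h1 i hi
    · rintro ⟨h2, h1⟩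
      refine ⟨fun i hi => ?_, h2⟩
      rw [← hχ''e i hi]
      exact h1 (ε i) ⟨i, hi, rfl⟩
  rw [hset, digits_cyl p hp0 hp1 (F.image ε) χ'',
    Finset.prod_image (fun a _ b _ hab => hε hab)]
  exact Finset.prod_congr rfl fun i hi => by rw [hχ''e i hi]

lemma isProbabilityMeasure_iidBool (ι : Type*) [Countable ι] (p : ℝ) :
    IsProbabilityMeasure (iidBool ι p) := by
  constructor
  rw [iidBool, Measure.map_apply measurable_reindex MeasurableSet.univ,
    Set.preimage_univ, Measure.map_apply (measurable_bernDigits p) MeasurableSet.univ,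
    Set.preimage_univ, Measure.restrict_apply MeasurableSet.univ, univ_inter,
    Real.volume_Ico]
  simp

def GoodEdge (ω : SiteCfg 3) (e : EdgeIdx 3) : Prop :=
  (∃ a : ℤ, a ≤ e.1 e.2 ∧ ω (seg e.1 e.2 a) = true) ∧
  (∃ b : ℤ, e.1 e.2 < b ∧ ω (seg e.1 e.2 b) = true)

lemma seg_seg (u : Site 3) (i : Fin 3) (x c : ℤ) : seg (seg u i x) i c = seg u i c := by
  simp [seg]

lemma seg_self (u : Site 3) (i : Fin 3) (x : ℤ) : seg u i x i = x := by
  simp [seg]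

lemma seg_ne (u : Site 3) (i : Fin 3) (x : ℤ) {j : Fin 3} (hj : j ≠ i) :
    seg u i x j = u j := by
  simp [seg, Function.update_of_ne hj]

lemma exists_pair (ω : SiteCfg 3) (e : EdgeIdx 3) (h : GoodEdge ω e) :
    ∃ vw : Site 3 × Site 3, (FeasiblePair ω vw.1 vw.2 ∧ EdgeOnSeg e vw.1 vw.2) ∧
      ∀ v w : Site 3, FeasiblePair ω v w → EdgeOnSeg e v w → (v, w) = vw := by
  obtain ⟨u, i⟩ := e
  obtain ⟨hA, hB⟩ := h
  dsimp only at hA hB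
  obtain ⟨a, ⟨hale, haocc⟩, hamax⟩ := Int.exists_greatest_of_bdd
    (P := fun a : ℤ => a ≤ u i ∧ ω (seg u i a) = true) ⟨u i, fun z hz => hz.1⟩ hA
  obtain ⟨b, ⟨hbgt, hbocc⟩, hbmin⟩ := Int.exists_least_of_bdd
    (P := fun b : ℤ => u i < b ∧ ω (seg u i b) = true) ⟨u i + 1, fun z hz => hz.1⟩ hB
  refine ⟨(seg u i a, seg u i b), ⟨⟨i, ?_, ?_, haocc, hbocc, ?_⟩,
    ⟨a, b, hale, hbgt, rfl, rfl⟩⟩, ?_⟩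
  · intro j hj
    dsimp only
    rw [seg_ne u i a hj, seg_ne u i b hj]
  · dsimp only
    rw [seg_self, seg_self]; omega
  · intro c hc1 hc2
    dsimp only at hc1 hc2 ⊢
    rw [seg_self] at hc1; rw [seg_self] at hc2; rw [seg_seg]
    by_contra hocc
    rw [Bool.not_eq_false] at hocc
    rcases le_or_gt c (u i) with hcu | hcu
    · have := hamax c ⟨hcu, hocc⟩; omega
    · have := hbmin c ⟨hcu, hocc⟩; omega
  · rintro v w ⟨i', hoff, hlt, hoccv, hoccw, hgap⟩ ⟨a', b', ha', hb', rfl, rfl⟩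
    dsimp only at ha' hb' hoff hlt hoccv hoccw hgap ⊢
    have hii : i' = i := by
      by_contra hii
      rw [seg_ne u i a' hii, seg_ne u i b' hii] at hlt
      exact lt_irrefl _ hlt
    rw [hii] at hlt hgap
    rw [seg_self, seg_self] at hlt
    have ha'le : a' ≤ a := hamax a' ⟨ha', hoccv⟩
    have hble : b ≤ b' := hbmin b' ⟨hb', hoccw⟩
    have ha'a : a' = a := by
      by_contra hne'
      have hgap' := hgap a
      rw [seg_self, seg_self, seg_seg] at hgap'
      have : ω (seg u i a) = false := hgap' (by omega) (by omega)
      rw [haocc] at this; exact absurd this (by decide)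
    have hbb : b' = b := by
      by_contra hne'
      have hgap' := hgap b
      rw [seg_self, seg_self, seg_seg] at hgap'
      have : ω (seg u i b) = false := hgap' (by omega) (by omega)
      rw [hbocc] at this; exact absurd this (by decide)
    rw [ha'a, hbb]

noncomputable def thePair (ω : SiteCfg 3) (e : EdgeIdx 3) : Site 3 × Site 3 :=
  haveI := Classical.propDecidable (GoodEdge ω e)
  if h : GoodEdge ω e then (exists_pair ω e h).choose else default

lemma thePair_spec {ω : SiteCfg 3} {e : EdgeIdx 3} (h : GoodEdge ω e) :
    (FeasiblePair ω (thePair ω e).1 (thePair ω e).2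
      ∧ EdgeOnSeg e (thePair ω e).1 (thePair ω e).2) ∧
    ∀ v w : Site 3, FeasiblePair ω v w → EdgeOnSeg e v w → (v, w) = thePair ω e := by
  rw [thePair, dif_pos h]
  exact (exists_pair ω e h).choose_spec

lemma edgeOpen_iff {ω : SiteCfg 3} {e : EdgeIdx 3} (h : GoodEdge ω e) (η : PairLabels 3) :
    EdgeOpen (ω, η) e ↔ η (thePair ω e) = true := by
  obtain ⟨⟨hf, hos⟩, huniq⟩ := thePair_spec h
  constructor
  · rintro ⟨v, w, h1, h2, h3⟩
    rwa [huniq v w h1 h2] at h3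
  · intro h3
    exact ⟨(thePair ω e).1, (thePair ω e).2, hf, hos, by rwa [Prod.mk.eta]⟩

lemma edge_eq_of_pair {ω : SiteCfg 3} {u u' : Site 3} {i i' : Fin 3} {v w : Site 3}
    (hf : FeasiblePair ω v w) (h1 : EdgeOnSeg (u, i) v w) (h2 : EdgeOnSeg (u', i') v w)
    (hsum : (∑ j, u j) = ∑ j, u' j) : ((u, i) : EdgeIdx 3) = (u', i') := by
  obtain ⟨a, b, hab1, hab2, hv, hw⟩ := h1
  obtain ⟨a', b', hab1', hab2', hv', hw'⟩ := h2
  obtain ⟨i₀, hoff, hlt, -⟩ := hf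
  dsimp only at hv hw hv' hw' hab1 hab2 hab1' hab2'
  have hab : a < b := lt_of_le_of_lt hab1 hab2
  have hi : i = i₀ := by
    by_contra hne
    have e1 : v i₀ = u i₀ := by rw [hv]; exact seg_ne u i a (fun hh => hne hh.symm)
    have e2 : w i₀ = u i₀ := by rw [hw]; exact seg_ne u i b (fun hh => hne hh.symm)
    rw [e1, e2] at hlt; exact lt_irrefl _ hlt
  have hi' : i' = i₀ := by
    by_contra hne
    have e1 : v i₀ = u' i₀ := by rw [hv']; exact seg_ne u' i' a' (fun hh => hne hh.symm)
    have e2 : w i₀ = u' i₀ := by rw [hw']; exact seg_ne u' i' b' (fun hh => hne hh.symm)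
    rw [e1, e2] at hlt; exact lt_irrefl _ hlt
  have hie : i = i' := hi.trans hi'.symm
  have hoffu : ∀ j : Fin 3, j ≠ i → u j = u' j := by
    intro j hj
    have e1 : v j = u j := by rw [hv]; exact seg_ne u i a hj
    have e2 : v j = u' j := by rw [hv']; exact seg_ne u' i' a' (hie ▸ hj)
    rw [← e1, e2]
  have hsum' : ∑ j ∈ Finset.univ.erase i, u j = ∑ j ∈ Finset.univ.erase i, u' j :=
    Finset.sum_congr rfl fun j hj => hoffu j (Finset.ne_of_mem_erase hj)
  have hu1 : u i + ∑ j ∈ Finset.univ.erase i, u j = ∑ j, u j :=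
    Finset.add_sum_erase _ u (Finset.mem_univ i)
  have hu2 : u' i + ∑ j ∈ Finset.univ.erase i, u' j = ∑ j, u' j :=
    Finset.add_sum_erase _ u' (Finset.mem_univ i)
  have hui : u i = u' i := by omega
  have huu : u = u' := by
    funext j
    by_cases hj : j = i
    · rw [hj]; exact hui
    · exact hoffu j hj
  rw [huu, hie]

lemma measurableSet_feasible (v w : Site 3) :
    MeasurableSet {ξ : Cfg 3 | FeasiblePair ξ.1 v w} := by
  have he : {ξ : Cfg 3 | FeasiblePair ξ.1 v w}
      = ⋃ i : Fin 3, ({ξ : Cfg 3 | ∀ j ≠ i, v j = w j} ∩ {ξ : Cfg 3 | v i < w i}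
        ∩ {ξ : Cfg 3 | ξ.1 v = true} ∩ {ξ : Cfg 3 | ξ.1 w = true}
        ∩ ⋂ c : ℤ, {ξ : Cfg 3 | v i < c → c < w i → ξ.1 (seg v i c) = false}) := by
    ext ξ
    simp only [FeasiblePair, Set.mem_setOf_eq, Set.mem_iUnion, Set.mem_inter_iff, Set.mem_iInter]
    constructor
    · rintro ⟨i, h1, h2, h3, h4, h5⟩; exact ⟨i, ⟨⟨⟨h1, h2⟩, h3⟩, h4⟩, h5⟩
    · rintro ⟨i, ⟨⟨⟨h1, h2⟩, h3⟩, h4⟩, h5⟩; exact ⟨i, h1, h2, h3, h4, h5⟩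
  rw [he]
  refine MeasurableSet.iUnion fun i => ?_
  have hmv : Measurable (fun ξ : Cfg 3 => ξ.1 v) := (measurable_pi_apply v).comp measurable_fst
  have hmw : Measurable (fun ξ : Cfg 3 => ξ.1 w) := (measurable_pi_apply w).comp measurable_fst
  have hv : MeasurableSet {ξ : Cfg 3 | ξ.1 v = true} := hmv (measurableSet_singleton true)
  have hw : MeasurableSet {ξ : Cfg 3 | ξ.1 w = true} := hmw (measurableSet_singleton true)
  refine ((((MeasurableSet.const _).inter (MeasurableSet.const _)).inter hv).inter hw).inter ?_
  refine MeasurableSet.iInter fun c => ?_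
  by_cases hc : v i < c ∧ c < w i
  · have : {ξ : Cfg 3 | v i < c → c < w i → ξ.1 (seg v i c) = false}
        = {ξ : Cfg 3 | ξ.1 (seg v i c) = false} := by
      ext ξ; simp [hc.1, hc.2]
    rw [this]
    have hm : Measurable (fun ξ : Cfg 3 => ξ.1 (seg v i c)) :=
      (measurable_pi_apply (seg v i c)).comp measurable_fst
    exact hm (measurableSet_singleton false)
  · have : {ξ : Cfg 3 | v i < c → c < w i → ξ.1 (seg v i c) = false} = Set.univ := by
      apply Set.eq_univ_of_forall
      intro ξ h1 h2
      exact absurd ⟨h1, h2⟩ hc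
    rw [this]
    exact MeasurableSet.univ

lemma measurableSet_edgeOpen (e : EdgeIdx 3) : MeasurableSet {ξ : Cfg 3 | EdgeOpen ξ e} := by
  have he : {ξ : Cfg 3 | EdgeOpen ξ e} = ⋃ v : Site 3, ⋃ w : Site 3,
      ({ξ : Cfg 3 | FeasiblePair ξ.1 v w} ∩ {ξ : Cfg 3 | EdgeOnSeg e v w}
        ∩ {ξ : Cfg 3 | ξ.2 (v, w) = true}) := by
    ext ξ
    simp only [EdgeOpen, Set.mem_setOf_eq, Set.mem_iUnion, Set.mem_inter_iff]
    constructor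
    · rintro ⟨v, w, h1, h2, h3⟩; exact ⟨v, w, ⟨h1, h2⟩, h3⟩
    · rintro ⟨v, w, ⟨h1, h2⟩, h3⟩; exact ⟨v, w, h1, h2, h3⟩
  rw [he]
  refine MeasurableSet.iUnion fun v => MeasurableSet.iUnion fun w => ?_
  refine ((measurableSet_feasible v w).inter (MeasurableSet.const _)).inter ?_
  have hm : Measurable (fun ξ : Cfg 3 => ξ.2 (v, w)) :=
    (measurable_pi_apply (v, w)).comp measurable_snd
  exact hm (measurableSet_singleton true)

lemma edgeState_true_set (e : EdgeIdx 3) :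
    {ξ : Cfg 3 | edgeState ξ e = true} = {ξ : Cfg 3 | EdgeOpen ξ e} := by
  ext ξ
  simp [edgeState, decide_eq_true_eq]

lemma measurable_edgeState (e : EdgeIdx 3) : Measurable (fun ξ : Cfg 3 => edgeState ξ e) := by
  apply measurable_to_countable'
  intro b
  cases b
  · have : (fun ξ : Cfg 3 => edgeState ξ e) ⁻¹' {false} = {ξ : Cfg 3 | EdgeOpen ξ e}ᶜ := by
      ext ξ
      simp [edgeState, decide_eq_true_eq]
    rw [this]
    exact (measurableSet_edgeOpen e).compl
  · have : (fun ξ : Cfg 3 => edgeState ξ e) ⁻¹' {true} = {ξ : Cfg 3 | EdgeOpen ξ e} := by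
      ext ξ
      simp [edgeState, decide_eq_true_eq]
    rw [this]
    exact measurableSet_edgeOpen e


lemma iidBool_allFalse_null {ι : Type*} [Countable ι] {p : ℝ} (hp0 : 0 < p) (hp1 : p ≤ 1)
    (s : ℕ → ι) (hs : Function.Injective s) :
    iidBool ι p {ω : ι → Bool | ∀ m : ℕ, ω (s m) = false} = 0 := by
  have hb : ∀ n : ℕ, iidBool ι p {ω : ι → Bool | ∀ m : ℕ, ω (s m) = false}
      ≤ ENNReal.ofReal (1 - p) ^ n := by
    intro n
    classical
    have hsub : {ω : ι → Bool | ∀ m : ℕ, ω (s m) = false}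
        ⊆ {ω : ι → Bool | ∀ i ∈ (Finset.range n).image s, ω i = false} := by
      intro ω hω i hi
      obtain ⟨m, -, rfl⟩ := Finset.mem_image.1 hi
      exact hω m
    refine le_trans (measure_mono hsub) ?_
    rw [iidBool_cyl p hp0.le hp1 ((Finset.range n).image s) (fun _ => false),
      Finset.prod_const, Finset.card_image_of_injective _ hs, Finset.card_range]
    simp [qB]
  have hlt1 : ENNReal.ofReal (1 - p) < 1 := by
    rw [← ENNReal.ofReal_one]
    exact (ENNReal.ofReal_lt_ofReal_iff one_pos).2 (by linarith)
  have htend := ENNReal.tendsto_pow_atTop_nhds_zero_of_lt_one hlt1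
  exact le_antisymm (ge_of_tendsto' htend hb) (zero_le)

lemma goodEdge_ae {p : ℝ} (hp0 : 0 < p) (hp1 : p ≤ 1) (e : EdgeIdx 3) :
    iidBool (Site 3) p {ω : SiteCfg 3 | ¬ GoodEdge ω e} = 0 := by
  have hsub : {ω : SiteCfg 3 | ¬ GoodEdge ω e}
      ⊆ {ω : SiteCfg 3 | ∀ m : ℕ, ω (seg e.1 e.2 (e.1 e.2 - m)) = false}
        ∪ {ω : SiteCfg 3 | ∀ m : ℕ, ω (seg e.1 e.2 (e.1 e.2 + 1 + m)) = false} := by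
    intro ω hω
    rw [Set.mem_setOf_eq, GoodEdge, not_and_or] at hω
    rcases hω with hω | hω
    · left
      intro m
      push_neg at hω
      have := hω (e.1 e.2 - m) (by omega)
      simpa using this
    · right
      intro m
      push_neg at hω
      have := hω (e.1 e.2 + 1 + m) (by omega)
      simpa using this
  refine measure_mono_null hsub (measure_union_null ?_ ?_)
  · apply iidBool_allFalse_null hp0 hp1
    intro m m' hmm
    have h2 : seg e.1 e.2 (e.1 e.2 - (m:ℤ)) e.2 = seg e.1 e.2 (e.1 e.2 - (m':ℤ)) e.2 :=
      congrFun hmm e.2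
    rw [seg_self, seg_self] at h2
    omega
  · apply iidBool_allFalse_null hp0 hp1
    intro m m' hmm
    have h2 : seg e.1 e.2 (e.1 e.2 + 1 + (m:ℤ)) e.2 = seg e.1 e.2 (e.1 e.2 + 1 + (m':ℤ)) e.2 :=
      congrFun hmm e.2
    rw [seg_self, seg_self] at h2
    omega

lemma core_inter (p lam : ℝ) (hp : p ∈ Set.Ioc (0:ℝ) 1) (hlam : lam ∈ Set.Icc (0:ℝ) 1)
    (k : ℤ) (S : Finset {e : EdgeIdx 3 // (∑ j, e.1 j) = k}) :
    alignMeasure 3 p lam (⋂ e ∈ S, {ξ : Cfg 3 | edgeState ξ e.1 = true})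
      = ENNReal.ofReal lam ^ S.card := by
  classical
  haveI h1 : IsProbabilityMeasure (iidBool (Site 3) p) := isProbabilityMeasure_iidBool _ _
  haveI h2 : IsProbabilityMeasure (iidBool (Site 3 × Site 3) lam) :=
    isProbabilityMeasure_iidBool _ _
  have hEmeas : MeasurableSet (⋂ e ∈ S, {ξ : Cfg 3 | edgeState ξ e.1 = true}) := by
    refine MeasurableSet.biInter S.countable_toSet fun e _ => ?_
    rw [edgeState_true_set]
    exact measurableSet_edgeOpen e.1
  rw [alignMeasure, Measure.prod_apply hEmeas]
  have hae : ∀ᵐ ω ∂ iidBool (Site 3) p, ∀ e ∈ S, GoodEdge ω e.1 := by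
    rw [MeasureTheory.ae_iff]
    have hsub : {ω : SiteCfg 3 | ¬ ∀ e ∈ S, GoodEdge ω e.1}
        ⊆ ⋃ e ∈ (S : Set {e : EdgeIdx 3 // (∑ j, e.1 j) = k}),
            {ω : SiteCfg 3 | ¬ GoodEdge ω e.1} := by
      intro ω hω
      rw [Set.mem_setOf_eq] at hω
      push_neg at hω
      obtain ⟨e, he, hbad⟩ := hω
      exact Set.mem_biUnion he hbad
    refine measure_mono_null hsub ?_
    rw [measure_biUnion_null_iff S.countable_toSet]
    exact fun e _ => goodEdge_ae hp.1 hp.2 e.1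
  have hslice : ∀ ω : SiteCfg 3, (∀ e ∈ S, GoodEdge ω e.1) →
      iidBool (Site 3 × Site 3) lam
        (Prod.mk ω ⁻¹' ⋂ e ∈ S, {ξ : Cfg 3 | edgeState ξ e.1 = true})
        = ENNReal.ofReal lam ^ S.card := by
    intro ω hω
    have hinj : Set.InjOn (fun e : {e : EdgeIdx 3 // (∑ j, e.1 j) = k} => thePair ω e.1) S := by
      intro e he e' he' hee
      obtain ⟨⟨hf, hos⟩, -⟩ := thePair_spec (hω e he)
      obtain ⟨⟨-, hos'⟩, -⟩ := thePair_spec (hω e' he')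
      dsimp only at hee
      rw [← hee] at hos'
      have hsum : (∑ j, e.1.1 j) = ∑ j, e'.1.1 j := e.2.trans e'.2.symm
      have heq : ((e.1.1, e.1.2) : EdgeIdx 3) = (e'.1.1, e'.1.2) :=
        edge_eq_of_pair hf hos hos' hsum
      exact Subtype.ext heq
    have hset : Prod.mk ω ⁻¹' (⋂ e ∈ S, {ξ : Cfg 3 | edgeState ξ e.1 = true})
        = {η : PairLabels 3 |
            ∀ c ∈ S.image (fun e : {e : EdgeIdx 3 // (∑ j, e.1 j) = k} => thePair ω e.1),
              η c = true} := by
      ext η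
      simp only [Set.mem_preimage, Set.mem_iInter, Set.mem_setOf_eq, Finset.mem_image]
      constructor
      · rintro h c ⟨e, he, rfl⟩
        have h1 := h e he
        simp only [edgeState, decide_eq_true_eq] at h1
        exact (edgeOpen_iff (hω e he) η).1 h1
      · intro h e he
        simp only [edgeState, decide_eq_true_eq]
        exact (edgeOpen_iff (hω e he) η).2 (h _ ⟨e, he, rfl⟩)
    rw [hset, iidBool_cyl lam hlam.1 hlam.2 _ (fun _ => true), Finset.prod_const,
      Finset.card_image_of_injOn hinj]
    simp [qB]
  calc (∫⁻ ω, iidBool (Site 3 × Site 3) lam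
          (Prod.mk ω ⁻¹' ⋂ e ∈ S, {ξ : Cfg 3 | edgeState ξ e.1 = true})
          ∂ iidBool (Site 3) p)
      = ∫⁻ _, ENNReal.ofReal lam ^ S.card ∂ iidBool (Site 3) p :=
        lintegral_congr_ae (hae.mono fun ω hω => hslice ω hω)
    _ = ENNReal.ofReal lam ^ S.card := by rw [lintegral_const, measure_univ, mul_one]

end Aux

/-- **Hexagonal embedding independence.** Fix `p ∈ (0,1]`, `λ ∈ [0,1]`
and `k ∈ ℤ`; let `V₁ = {x+y+z = k}` and `V₂ = {x+y+z = k+1}` in `ℤ³`. Under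
`ℙ_{p,λ,3}` the states of the edges with one endpoint in `V₁` and the other in `V₂`
are independent, each open with probability `λ`. -/
theorem hexagonal_embedding_independent (p lam : ℝ) (hp : p ∈ Set.Ioc (0 : ℝ) 1)
    (hlam : lam ∈ Set.Icc (0 : ℝ) 1) (k : ℤ) :
    ProbabilityTheory.iIndepFun
      (fun (e : {e : EdgeIdx 3 // (∑ j, e.1 j) = k}) (ξ : Cfg 3) => edgeState ξ e.1)
      (alignMeasure 3 p lam) ∧
    ∀ e : {e : EdgeIdx 3 // (∑ j, e.1 j) = k},
      alignMeasure 3 p lam {ξ | edgeState ξ e.1 = true} = ENNReal.ofReal lam := by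
  have hsingle : ∀ e : {e : EdgeIdx 3 // (∑ j, e.1 j) = k},
      alignMeasure 3 p lam {ξ | edgeState ξ e.1 = true} = ENNReal.ofReal lam := by
    intro e
    have h := core_inter p lam hp hlam k {e}
    simp only [Finset.card_singleton, pow_one] at h
    rw [← h]
    congr 1
    ext ξ
    simp
  refine ⟨?_, hsingle⟩
  haveI h1 : IsProbabilityMeasure (iidBool (Site 3) p) := isProbabilityMeasure_iidBool _ _
  haveI h2 : IsProbabilityMeasure (iidBool (Site 3 × Site 3) lam) :=
    isProbabilityMeasure_iidBool _ _
  haveI h3 : IsProbabilityMeasure (alignMeasure 3 p lam) := by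
    rw [alignMeasure]; infer_instance
  rw [ProbabilityTheory.iIndepFun_iff_iIndep]
  refine ProbabilityTheory.iIndepSets.iIndep
    (fun e => measurable_iff_comap_le.1 (measurable_edgeState e.1))
    (fun e : {e : EdgeIdx 3 // (∑ j, e.1 j) = k} =>
      ({{ξ : Cfg 3 | edgeState ξ e.1 = true}} : Set (Set (Cfg 3))))
    (fun e => IsPiSystem.singleton _) (fun e => ?_) ?_
  · apply le_antisymm
    · rw [← measurable_iff_comap_le]
      refine @measurable_to_countable' Bool (Cfg 3) _ _
        (MeasurableSpace.generateFrom {{ξ : Cfg 3 | edgeState ξ e.1 = true}})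
        (fun ξ => edgeState ξ e.1) ?_
      intro b
      cases b
      · have hpre : (fun ξ : Cfg 3 => edgeState ξ e.1) ⁻¹' {false}
            = {ξ : Cfg 3 | edgeState ξ e.1 = true}ᶜ := by
          ext ξ
          cases h : edgeState ξ e.1 <;> simp [h]
        rw [hpre]
        exact (MeasurableSpace.measurableSet_generateFrom (Set.mem_singleton _)).compl
      · have hpre : (fun ξ : Cfg 3 => edgeState ξ e.1) ⁻¹' {true}
            = {ξ : Cfg 3 | edgeState ξ e.1 = true} := rfl
        rw [hpre]
        exact MeasurableSpace.measurableSet_generateFrom (Set.mem_singleton _)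
    · apply MeasurableSpace.generateFrom_le
      intro s hs
      rw [Set.mem_singleton_iff] at hs
      subst hs
      exact ⟨{true}, measurableSet_singleton true, rfl⟩
  · rw [ProbabilityTheory.iIndepSets_iff]
    intro s f' H
    have hInter : (⋂ e ∈ s, f' e) = ⋂ e ∈ s, {ξ : Cfg 3 | edgeState ξ e.1 = true} :=
      Set.iInter₂_congr fun e he => Set.mem_singleton_iff.1 (H e he)
    rw [hInter, core_inter p lam hp hlam k s,
      Finset.prod_congr rfl (fun e he => by rw [Set.mem_singleton_iff.1 (H e he), hsingle e]),
      Finset.prod_const]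


end AlignmentPercolation
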